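/- Let τ ∈ ℝ, let Ω ⊆ ℝ² be open, and let v : Ω → ℝ be a C² function with v_x² + v_y² < 1 satisfying the spacelike constant-mean-curvature-τ equation (1−v_y²)v_xx + 2 v_x v_y v_xy + (1−v_x²)v_yy = 2τ ω̃³, where ω̃ = (1 − v_x² − v_y²)^(1/2). Then the complex number Q̃₁₁ = (2/ω̃²)(v_x v_y v_xx + (1−v_x²) v_xy) + (2i/ω̃) v_xx − 2iτ(1−v_x²) satisfies |Q̃₁₁|² = 4(1−v_x²)² ((v_xy² − v_xx v_yy)/ω̃⁴ + τ²) on Ω. -/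

import Mathlib

/-- Partial derivative in the `x` direction. -/
noncomputable def px (f : ℝ × ℝ → ℝ) (p : ℝ × ℝ) : ℝ := fderiv ℝ f p (1, 0)

/-- Partial derivative in the `y` direction. -/
noncomputable def py (f : ℝ × ℝ → ℝ) (p : ℝ × ℝ) : ℝ := fderiv ℝ f p (0, 1)

/-- Lorentzian area element `ω̃ = (1 − v_x² − v_y²)^(1/2)` of the graph of `v`. -/
noncomputable def omegT (v : ℝ × ℝ → ℝ) (p : ℝ × ℝ) : ℝ :=
  Real.sqrt (1 - (px v p) ^ 2 - (py v p) ^ 2)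

/-- `(ẽ₁,ẽ₁)`-component of the Hopf differential of the spacelike CMC-`τ`
graph of `v` in `𝕃³`:
`Q̃₁₁ = (2/ω̃²)(v_x v_y v_xx + (1−v_x²) v_xy) + (2i/ω̃) v_xx − 2iτ(1−v_x²)`. -/
noncomputable def QT11 (τ : ℝ) (v : ℝ × ℝ → ℝ) (p : ℝ × ℝ) : ℂ :=
  ((2 / (omegT v p) ^ 2) *
      (px v p * py v p * px (px v) p + (1 - (px v p) ^ 2) * py (px v) p) : ℝ) +
    Complex.I * ((2 / omegT v p) * px (px v) p - 2 * τ * (1 - (px v p) ^ 2) : ℝ)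

/-- for a spacelike CMC-`τ` graph in `𝕃³`, the squared modulus of
the `(ẽ₁,ẽ₁)`-component of the Hopf differential satisfies
`|Q̃₁₁|² = 4(1−v_x²)² ((v_xy² − v_xx v_yy)/ω̃⁴ + τ²)`. -/
theorem abs_sq_hopf (τ : ℝ) (Ω : Set (ℝ × ℝ)) (hΩ : IsOpen Ω)
    (v : ℝ × ℝ → ℝ) (hv : ContDiffOn ℝ 2 v Ω)
    (hsp : ∀ p ∈ Ω, (px v p) ^ 2 + (py v p) ^ 2 < 1)
    (hcmc : ∀ p ∈ Ω,
      (1 - (py v p) ^ 2) * px (px v) p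
        + 2 * px v p * py v p * py (px v) p
        + (1 - (px v p) ^ 2) * py (py v) p = 2 * τ * (omegT v p) ^ 3) :
    ∀ p ∈ Ω,
      ‖QT11 τ v p‖ ^ 2
        = 4 * (1 - (px v p) ^ 2) ^ 2 *
            (((py (px v) p) ^ 2 - px (px v) p * py (py v) p) / (omegT v p) ^ 4 + τ ^ 2) := by
  intro p hp
  set a := px v p
  set b := py v p
  set A := px (px v) p
  set B := py (px v) p
  set C := py (py v) p
  set w := omegT v p with hw
  have hnn : (0:ℝ) ≤ 1 - a ^ 2 - b ^ 2 := by
    have := hsp p hp; linarith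
  have hw2 : w ^ 2 = 1 - a ^ 2 - b ^ 2 := Real.sq_sqrt hnn
  have hwpos : 0 < w := by
    rw [hw]
    unfold omegT
    exact Real.sqrt_pos.2 (by have := hsp p hp; linarith)
  have hw0 : w ≠ 0 := ne_of_gt hwpos
  have hE : (1 - b ^ 2) * A + 2 * a * b * B + (1 - a ^ 2) * C = 2 * τ * w ^ 3 :=
    hcmc p hp
  have habs : ‖QT11 τ v p‖ ^ 2
      = ((2 / w ^ 2) * (a * b * A + (1 - a ^ 2) * B)) ^ 2
        + ((2 / w) * A - 2 * τ * (1 - a ^ 2)) ^ 2 := by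
    have hre : (QT11 τ v p).re = (2 / w ^ 2) * (a * b * A + (1 - a ^ 2) * B) := by
      simp only [QT11, Complex.add_re, Complex.mul_re, Complex.I_re, Complex.I_im,
        Complex.ofReal_re, Complex.ofReal_im]
      ring
    have him : (QT11 τ v p).im = (2 / w) * A - 2 * τ * (1 - a ^ 2) := by
      simp only [QT11, Complex.add_im, Complex.mul_im, Complex.I_re, Complex.I_im,
        Complex.ofReal_re, Complex.ofReal_im]
      ring
    rw [Complex.sq_norm, Complex.normSq_apply, hre, him]
    ring
  rw [habs]
  have h4 : (w:ℝ) ^ 4 ≠ 0 := pow_ne_zero _ hw0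
  have hnum : 4 * (a * b * A + (1 - a ^ 2) * B) ^ 2
      + (2 * A * w - 2 * τ * (1 - a ^ 2) * w ^ 2) ^ 2
      = 4 * (1 - a ^ 2) ^ 2 * (B ^ 2 - A * C) + 4 * (1 - a ^ 2) ^ 2 * τ ^ 2 * w ^ 4 := by
    linear_combination (4 * A ^ 2) * hw2 + (4 * (1 - a ^ 2) * A) * hE
  apply mul_right_cancel₀ h4
  have hL : (((2 / w ^ 2) * (a * b * A + (1 - a ^ 2) * B)) ^ 2
      + ((2 / w) * A - 2 * τ * (1 - a ^ 2)) ^ 2) * w ^ 4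
      = 4 * (a * b * A + (1 - a ^ 2) * B) ^ 2
        + (2 * A * w - 2 * τ * (1 - a ^ 2) * w ^ 2) ^ 2 := by
    field_simp
    ring
  have hR : (4 * (1 - a ^ 2) ^ 2 * ((B ^ 2 - A * C) / w ^ 4 + τ ^ 2)) * w ^ 4
      = 4 * (1 - a ^ 2) ^ 2 * (B ^ 2 - A * C) + 4 * (1 - a ^ 2) ^ 2 * τ ^ 2 * w ^ 4 := by
    field_simp
  rw [hL, hR, hnum]
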